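/- (Corollary 4.2, RW retains a copy of itself under R_p.) Let m, k, r be positive integers, n = m(k+1)r, and let p ∈ (0,1] satisfy p·r/2 ≥ 1. Let ρ be drawn from R_p over restrictions of the n variables of RW_{m,k,r}. Then with probability at least 1 − m·(k+1)·exp(−p·r/8), the restricted function RW_{m,k,r}↾ρ contains a perfect copy of RW_{m,k,r'} where r' = ⌊p·r/2⌋. -/

import Mathlib

open Finset

/-! ### AC⁰ circuits: unbounded fan-in AND/OR gates over literals -/

inductive AC0 (ι : Type) : Type
  | lit : ι → Bool → AC0 ι
  | and : (a : ℕ) → (Fin a → AC0 ι) → AC0 ι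
  | or  : (a : ℕ) → (Fin a → AC0 ι) → AC0 ι

namespace AC0

variable {ι : Type}

def eval : AC0 ι → (ι → Bool) → Bool
  | .lit i b, x => if b then x i else !(x i)
  | .and _ f, x => decide (∀ j, (f j).eval x = true)
  | .or _ f, x => decide (∃ j, (f j).eval x = true)

/-- Number of gates, literals included in the count. -/
def size : AC0 ι → ℕ
  | .lit _ _ => 1
  | .and _ f => 1 + ∑ j, (f j).size
  | .or _ f => 1 + ∑ j, (f j).size

def depth : AC0 ι → ℕ
  | .lit _ _ => 0
  | .and _ f => 1 + Finset.univ.sup fun j => (f j).depth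
  | .or _ f => 1 + Finset.univ.sup fun j => (f j).depth

end AC0

/-- `g` is an arbitrary symmetric Boolean function: it depends only on the
number of `true`s among its inputs. -/
def IsSymFun {a : ℕ} (g : (Fin a → Bool) → Bool) : Prop :=
  ∃ φ : ℕ → Bool, ∀ y, g y = φ (Finset.univ.filter fun i => y i = true).card

/-- `g` is an arbitrary linear threshold function: `g y = 1` iff `∑ wᵢ yᵢ ≥ θ`. -/
def IsThrFun {a : ℕ} (g : (Fin a → Bool) → Bool) : Prop :=
  ∃ (w : Fin a → ℝ) (θ : ℝ), ∀ y, g y = decide (θ ≤ ∑ i, if y i = true then w i else 0)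

/-- `F` is computed by a SYM∘AC⁰ circuit: a symmetric output gate fed by
AC⁰ circuits of depth at most `d`, with at most `S` gates in total
(the top gate and all gates of the feeding circuits, literals included). -/
def SymOnAC0 {ι : Type} (S : ℝ) (d : ℕ) (F : (ι → Bool) → Bool) : Prop :=
  ∃ (a : ℕ) (g : (Fin a → Bool) → Bool) (C : Fin a → AC0 ι),
    IsSymFun g ∧ (∀ i, (C i).depth ≤ d) ∧ (((1 + ∑ i, (C i).size : ℕ) : ℝ) ≤ S) ∧
    ∀ x, F x = g fun i => (C i).eval x

/-- `F` is computed by a THR∘AC⁰ circuit, analogously. -/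
def ThrOnAC0 {ι : Type} (S : ℝ) (d : ℕ) (F : (ι → Bool) → Bool) : Prop :=
  ∃ (a : ℕ) (g : (Fin a → Bool) → Bool) (C : Fin a → AC0 ι),
    IsThrFun g ∧ (∀ i, (C i).depth ≤ d) ∧ (((1 + ∑ i, (C i).size : ℕ) : ℝ) ≤ S) ∧
    ∀ x, F x = g fun i => (C i).eval x

/-! ### General circuits with AND/OR gates and arbitrary SYM/THR gates -/

inductive GenCircuit (ι : Type) : Type
  | lit : ι → Bool → GenCircuit ι
  | and : (a : ℕ) → (Fin a → GenCircuit ι) → GenCircuit ι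
  | or  : (a : ℕ) → (Fin a → GenCircuit ι) → GenCircuit ι
  | sym : (a : ℕ) → (ℕ → Bool) → (Fin a → GenCircuit ι) → GenCircuit ι
  | thr : (a : ℕ) → (Fin a → ℝ) → ℝ → (Fin a → GenCircuit ι) → GenCircuit ι

namespace GenCircuit

variable {ι : Type}

noncomputable def eval : GenCircuit ι → (ι → Bool) → Bool
  | .lit i b, x => if b then x i else !(x i)
  | .and _ f, x => decide (∀ j, (f j).eval x = true)
  | .or _ f, x => decide (∃ j, (f j).eval x = true)
  | .sym _ φ f, x => φ (Finset.univ.filter fun j => (f j).eval x = true).card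
  | .thr _ w θ f, x => decide (θ ≤ ∑ j, if (f j).eval x = true then w j else 0)

/-- Number of gates, literals included in the count. -/
def size : GenCircuit ι → ℕ
  | .lit _ _ => 1
  | .and _ f => 1 + ∑ j, (f j).size
  | .or _ f => 1 + ∑ j, (f j).size
  | .sym _ _ f => 1 + ∑ j, (f j).size
  | .thr _ _ _ f => 1 + ∑ j, (f j).size

def depth : GenCircuit ι → ℕ
  | .lit _ _ => 0
  | .and _ f => 1 + Finset.univ.sup fun j => (f j).depth
  | .or _ f => 1 + Finset.univ.sup fun j => (f j).depth
  | .sym _ _ f => 1 + Finset.univ.sup fun j => (f j).depth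
  | .thr _ _ _ f => 1 + Finset.univ.sup fun j => (f j).depth

/-- The number of SYM and THR gates in the circuit. -/
def symThrCount : GenCircuit ι → ℕ
  | .lit _ _ => 0
  | .and _ f => ∑ j, (f j).symThrCount
  | .or _ f => ∑ j, (f j).symThrCount
  | .sym _ _ f => 1 + ∑ j, (f j).symThrCount
  | .thr _ _ _ f => 1 + ∑ j, (f j).symThrCount

end GenCircuit

/-! ### Restrictions and distributions -/

/-- Apply a restriction (`none` = `*` = free) to an input. -/
def applyR {ι : Type} (ρ : ι → Option Bool) (x : ι → Bool) : ι → Bool :=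
  fun i => (ρ i).getD (x i)

/-- The restricted function `f↾ρ`. -/
def restrictF {ι : Type} (f : (ι → Bool) → Bool) (ρ : ι → Option Bool) :
    (ι → Bool) → Bool :=
  fun x => f (applyR ρ x)

def freeCount {ι : Type} [Fintype ι] (ρ : ι → Option Bool) : ℕ :=
  (Finset.univ.filter fun i => ρ i = none).card

open Classical in
/-- Probability of the event `P` under the (finitely supported) density `R`. -/
noncomputable def prOf {α : Type} [Fintype α] (R : α → ℝ) (P : α → Prop) : ℝ :=
  ∑ a, if P a then R a else 0

/-- A density `R` on restrictions is a fair distribution: it is a probability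
distribution, and drawing `ρ ← R` and filling in all `*`s with independent
uniform bits yields the uniform distribution on `{0,1}^n`. -/
def IsFair {ι : Type} [Fintype ι] [DecidableEq ι] (R : (ι → Option Bool) → ℝ) : Prop :=
  (∀ ρ, 0 ≤ R ρ) ∧ ((∑ ρ : ι → Option Bool, R ρ) = 1) ∧
  ∀ x : ι → Bool,
    (∑ ρ : ι → Option Bool, R ρ * if applyR ρ x = x then ((1 : ℝ) / 2) ^ freeCount ρ else 0)
      = ((1 : ℝ) / 2) ^ Fintype.card ι

/-- The density of the random restriction `R_p`: each coordinate independently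
is `*` with probability `p`, and `0` or `1` each with probability `(1-p)/2`. -/
noncomputable def RpDensity {ι : Type} [Fintype ι] (p : ℝ) (ρ : ι → Option Bool) : ℝ :=
  ∏ i, (ρ i).elim p (fun _ => (1 - p) / 2)

/-- The density of the random subset `L ⊆_q ι` (as an indicator function):
each element is included independently with probability `q`. -/
noncomputable def subsetDensity {ι : Type} [Fintype ι] (q : ℝ) (L : ι → Bool) : ℝ :=
  ∏ i, if L i then q else 1 - q

/-- The fraction of inputs on which `F` and `H` agree. -/
noncomputable def agreePr {ι : Type} [Fintype ι] [DecidableEq ι]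
    (F H : (ι → Bool) → Bool) : ℝ :=
  ((Finset.univ.filter fun x : ι → Bool => F x = H x).card : ℝ) / 2 ^ Fintype.card ι

/-- `G : {0,1}^t → {0,1}^ι` ε-fools the Boolean function `f`. -/
def Fools {ι : Type} [Fintype ι] [DecidableEq ι] {t : ℕ}
    (G : (Fin t → Bool) → (ι → Bool)) (f : (ι → Bool) → Bool) (ε : ℝ) : Prop :=
  |(∑ s : Fin t → Bool, if f (G s) = true then (1 : ℝ) else 0) / 2 ^ t
    - (∑ x : ι → Bool, if f x = true then (1 : ℝ) else 0) / 2 ^ Fintype.card ι| ≤ ε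

/-! ### Decision trees -/

inductive DTree (ι : Type) (α : Type) : Type
  | leaf : α → DTree ι α
  | node : ι → DTree ι α → DTree ι α → DTree ι α

namespace DTree

variable {ι α : Type}

def depth : DTree ι α → ℕ
  | .leaf _ => 0
  | .node _ t0 t1 => 1 + max t0.depth t1.depth

def evalWith (ev : α → (ι → Bool) → Bool) : DTree ι α → (ι → Bool) → Bool
  | .leaf a, x => ev a x
  | .node i t0 t1, x => if x i then t1.evalWith ev x else t0.evalWith ev x

def leaves : DTree ι α → List α
  | .leaf a => [a]
  | .node _ t0 t1 => t0.leaves ++ t1.leaves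

end DTree

/-- Evaluation of an ordinary decision tree with Boolean leaves. -/
def evalDT {ι : Type} (T : DTree ι Bool) (x : ι → Bool) : Bool :=
  T.evalWith (fun b _ => b) x

/-- `F` is computed by a `(t, C)`-decision tree: a depth-`t` decision tree
whose leaves are labeled by functions from the class `C`. -/
def ComputedByClassDT {ι : Type} (t : ℕ) (C : ((ι → Bool) → Bool) → Prop)
    (F : (ι → Bool) → Bool) : Prop :=
  ∃ T : DTree ι ((ι → Bool) → Bool), T.depth ≤ t ∧ (∀ g ∈ T.leaves, C g) ∧
    ∀ x, F x = T.evalWith (fun g => g) x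

/-! ### SYM∘AND and THR∘AND circuits -/

/-- `F` is computed by a SYM∘AND circuit with at most `S` bottom AND gates
(terms), each a conjunction of at most `kb` literals. -/
def IsSymAnd {ι : Type} (S kb : ℝ) (F : (ι → Bool) → Bool) : Prop :=
  ∃ (a : ℕ) (g : (Fin a → Bool) → Bool) (T : Fin a → List (ι × Bool)),
    IsSymFun g ∧ ((a : ℝ) ≤ S) ∧ (∀ i, ((T i).length : ℝ) ≤ kb) ∧
    ∀ x, F x = g fun i => (T i).all fun l => x l.1 == l.2

/-- `F` is computed by a THR∘AND circuit, analogously. -/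
def IsThrAnd {ι : Type} (S kb : ℝ) (F : (ι → Bool) → Bool) : Prop :=
  ∃ (a : ℕ) (g : (Fin a → Bool) → Bool) (T : Fin a → List (ι × Bool)),
    IsThrFun g ∧ ((a : ℝ) ≤ S) ∧ (∀ i, ((T i).length : ℝ) ≤ kb) ∧
    ∀ x, F x = g fun i => (T i).all fun l => x l.1 == l.2

/-! ### The Razborov–Wigderson and generalized inner product functions -/

/-- Parity (XOR) of a finite family of bits. -/
def bparity {α : Type} [Fintype α] (f : α → Bool) : Bool :=
  decide ((Finset.univ.filter fun a => f a = true).card % 2 = 1)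

/-- `RW_{m,k,r}(x) = ⊕_{i∈[m]} ⋀_{j∈[k+1]} ⊕_{ℓ∈[r]} x_{i,j,ℓ}`. -/
def RW (m k r : ℕ) (x : Fin m × Fin (k + 1) × Fin r → Bool) : Bool :=
  bparity fun i : Fin m =>
    decide (∀ j : Fin (k + 1), bparity (fun ℓ : Fin r => x (i, j, ℓ)) = true)

/-- `GIP_{m',k'}(x) = ⊕_{i∈[m']} ⋀_{j∈[k']} x_{i,j}`. -/
def GIP (m' k' : ℕ) (x : Fin m' × Fin k' → Bool) : Bool :=
  bparity fun i : Fin m' => decide (∀ j : Fin k', x (i, j) = true)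

/-- `g` contains a perfect copy of `GIP_{m',k'}`: there is a restriction `κ`
whose free variables are exactly the range of an injection `e` from the GIP
index set, and bits `b`, `bb i j`, such that `g↾κ` is the corresponding
shifted/negated copy of GIP. -/
def ContainsGIP {ι : Type} (m' k' : ℕ) (g : (ι → Bool) → Bool) : Prop :=
  ∃ (κ : ι → Option Bool) (e : Fin m' × Fin k' → ι) (b : Bool)
    (bb : Fin m' × Fin k' → Bool),
    Function.Injective e ∧ (∀ v, κ v = none ↔ v ∈ Set.range e) ∧
    ∀ x : ι → Bool,
      g (applyR κ x) =
        xor b (bparity fun i : Fin m' =>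
          decide (∀ j : Fin k', xor (bb (i, j)) (x (e (i, j))) = true))

/-- `g` contains a perfect copy of `RW_{m',k',r'}`, analogously. -/
def ContainsRW {ι : Type} (m' k' r' : ℕ) (g : (ι → Bool) → Bool) : Prop :=
  ∃ (κ : ι → Option Bool) (e : Fin m' × Fin (k' + 1) × Fin r' → ι) (b : Bool)
    (bb : Fin m' × Fin (k' + 1) → Bool),
    Function.Injective e ∧ (∀ v, κ v = none ↔ v ∈ Set.range e) ∧
    ∀ x : ι → Bool,
      g (applyR κ x) =
        xor b (bparity fun i : Fin m' =>
          decide (∀ j : Fin (k' + 1),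
            xor (bb (i, j)) (bparity fun ℓ : Fin r' => x (e (i, j, ℓ))) = true))


/-! ### Auxiliary lemmas for Corollary 4.2 -/

section Aux4p2
open Finset

lemma prOf_mono {α : Type} [Fintype α] (R : α → ℝ) (h : ∀ a, 0 ≤ R a)
    {P Q : α → Prop} (hPQ : ∀ a, P a → Q a) : prOf R P ≤ prOf R Q := by
  classical
  unfold prOf
  refine Finset.sum_le_sum fun a _ => ?_
  by_cases hp : P a
  · simp [hp, hPQ a hp]
  · simp only [hp, if_false]
    split
    · exact h a
    · exact le_rfl

lemma prOf_compl {α : Type} [Fintype α] (R : α → ℝ) (hs : ∑ a, R a = 1) (P : α → Prop) :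
    prOf R P = 1 - prOf R (fun a => ¬ P a) := by
  classical
  unfold prOf
  rw [← hs, eq_sub_iff_add_eq, ← Finset.sum_add_distrib]
  refine Finset.sum_congr rfl fun a _ => ?_
  by_cases hp : P a <;> simp [hp]

lemma prOf_union {α : Type} [Fintype α] {ι : Type} [Fintype ι] (R : α → ℝ)
    (h : ∀ a, 0 ≤ R a) (P : ι → α → Prop) :
    prOf R (fun a => ∃ i, P i a) ≤ ∑ i, prOf R (P i) := by
  classical
  unfold prOf
  rw [Finset.sum_comm]
  refine Finset.sum_le_sum fun a _ => ?_
  by_cases hp : ∃ i, P i a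
  · obtain ⟨i, hi⟩ := hp
    rw [if_pos ⟨i, hi⟩]
    refine Finset.single_le_sum (f := fun i => if P i a then R a else 0) (fun i _ => ?_)
      (Finset.mem_univ i) |>.trans_eq' ?_
    · skip
      split
      · exact h a
      · exact le_rfl
    · rw [if_pos hi]
  · rw [if_neg hp]
    refine Finset.sum_nonneg fun i _ => ?_
    split
    · exact h a
    · exact le_rfl

/-- Parity of a Boolean function over a finite set. -/
def par {β : Type} [DecidableEq β] (s : Finset β) (f : β → Bool) : Bool :=
  decide ((s.filter fun a => f a = true).card % 2 = 1)

lemma bparity_eq_par {α : Type} [Fintype α] [DecidableEq α] (f : α → Bool) :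
    bparity f = par Finset.univ f := rfl

lemma par_congr {β : Type} [DecidableEq β] {s : Finset β} {f g : β → Bool}
    (h : ∀ a ∈ s, f a = g a) : par s f = par s g := by
  unfold par
  rw [Finset.filter_congr (fun a ha => by rw [h a ha])]

lemma par_union {β : Type} [DecidableEq β] {s t : Finset β} (h : Disjoint s t)
    (f : β → Bool) : par (s ∪ t) f = xor (par s f) (par t f) := by
  unfold par
  rw [Finset.filter_union, Finset.card_union_of_disjoint (Finset.disjoint_filter_filter h)]
  rcases Nat.mod_two_eq_zero_or_one (s.filter fun a => f a = true).card with h1 | h1 <;>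
    rcases Nat.mod_two_eq_zero_or_one (t.filter fun a => f a = true).card with h2 | h2 <;>
      simp [Nat.add_mod, h1, h2]

lemma par_image {β γ : Type} [DecidableEq β] [DecidableEq γ] {s : Finset β}
    {g : β → γ} (hg : Function.Injective g) (f : γ → Bool) :
    par (s.image g) f = par s (fun a => f (g a)) := by
  unfold par
  rw [Finset.filter_image, Finset.card_image_of_injective _ hg]

lemma contains_of_good (m k r r' : ℕ)
    (ρ : (Fin m × Fin (k + 1) × Fin r) → Option Bool)
    (hg : ∀ i j, r' ≤ (univ.filter fun ℓ => ρ (i, j, ℓ) = none).card) :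
    ContainsRW m k r' (restrictF (RW m k r) ρ) := by
  classical
  have hemb : ∀ (i : Fin m) (j : Fin (k + 1)),
      ∃ E : Fin r' ↪ Fin r, ∀ ℓ, ρ (i, j, E ℓ) = none := by
    intro i j
    obtain ⟨E, hE⟩ := Function.Embedding.exists_of_card_le_finset (α := Fin r')
      (s := univ.filter fun ℓ => ρ (i, j, ℓ) = none) (by simpa using hg i j)
    refine ⟨E, fun ℓ => ?_⟩
    have := hE (Set.mem_range_self ℓ)
    simpa using this
  choose E hE using hemb
  set e : Fin m × Fin (k + 1) × Fin r' → Fin m × Fin (k + 1) × Fin r :=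
    fun v => (v.1, v.2.1, E v.1 v.2.1 v.2.2) with he
  have einj : Function.Injective e := by
    rintro ⟨a, b, c⟩ ⟨a', b', c'⟩ h
    simp only [he, Prod.mk.injEq] at h
    obtain ⟨h1, h2, h3⟩ := h
    subst h1; subst h2
    exact Prod.ext rfl (Prod.ext rfl ((E a b).injective h3))
  have hmem : ∀ (i : Fin m) (j : Fin (k + 1)) (ℓ : Fin r),
      ((i, j, ℓ) : Fin m × Fin (k + 1) × Fin r) ∈ Set.range e ↔
        ℓ ∈ univ.image (E i j) := by
    intro i j ℓ
    constructor
    · rintro ⟨⟨a, b, c⟩, hv⟩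
      simp only [he, Prod.mk.injEq] at hv
      obtain ⟨h1, h2, h3⟩ := hv
      subst h1; subst h2
      exact Finset.mem_image.2 ⟨c, Finset.mem_univ c, h3⟩
    · rintro hℓ
      obtain ⟨c, _, hc⟩ := Finset.mem_image.1 hℓ
      exact ⟨(i, j, c), by simp [he, hc]⟩
  refine ⟨fun v => if v ∈ Set.range e then none else some false, e, false,
    fun q => par (univ \ (univ.image (E q.1 q.2)))
      (fun ℓ => (ρ (q.1, q.2, ℓ)).getD false),
    einj, fun v => by by_cases h : v ∈ Set.range e <;> simp [h], ?_⟩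
  intro x
  set κ : (Fin m × Fin (k + 1) × Fin r) → Option Bool :=
    fun v => if v ∈ Set.range e then none else some false with hκ
  set y : (Fin m × Fin (k + 1) × Fin r) → Bool := applyR ρ (applyR κ x) with hy
  have key : ∀ (i : Fin m) (j : Fin (k + 1)),
      bparity (fun ℓ : Fin r => y (i, j, ℓ)) =
        xor (par (univ \ (univ.image (E i j))) (fun ℓ => (ρ (i, j, ℓ)).getD false))
          (bparity fun ℓ₀ : Fin r' => x (e (i, j, ℓ₀))) := by
    intro i j
    set A : Finset (Fin r) := univ.image (E i j) with hA
    have hsplit : (univ : Finset (Fin r)) = A ∪ (univ \ A) :=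
      (Finset.union_sdiff_of_subset (Finset.subset_univ A)).symm
    rw [bparity_eq_par]
    conv_lhs => rw [hsplit]
    rw [par_union Finset.disjoint_sdiff]
    have h1 : par A (fun ℓ => y (i, j, ℓ)) = bparity fun ℓ₀ : Fin r' => x (e (i, j, ℓ₀)) := by
      rw [hA, par_image (E i j).injective, bparity_eq_par]
      refine par_congr fun ℓ₀ _ => ?_
      have hfree : ρ (i, j, E i j ℓ₀) = none := hE i j ℓ₀
      have hrange : ((i, j, E i j ℓ₀) : Fin m × Fin (k + 1) × Fin r) ∈ Set.range e :=
        ⟨(i, j, ℓ₀), rfl⟩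
      simp [hy, applyR, hfree, hκ, hrange, he]
    have h2 : par (univ \ A) (fun ℓ => y (i, j, ℓ)) =
        par (univ \ A) (fun ℓ => (ρ (i, j, ℓ)).getD false) := by
      refine par_congr fun ℓ hℓ => ?_
      have hnotA : ℓ ∉ A := (Finset.mem_sdiff.1 hℓ).2
      cases hc : ρ (i, j, ℓ) with
      | some c => simp [hy, applyR, hc]
      | none =>
        have hnr : ((i, j, ℓ) : Fin m × Fin (k + 1) × Fin r) ∉ Set.range e := by
          rw [hmem]; exact hnotA
        rw [hy]
        simp only [applyR, hc, hκ]
        rw [if_neg hnr]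
        rfl
    rw [h1, h2, Bool.xor_comm]
  show RW m k r y = _
  rw [Bool.false_xor]
  unfold RW
  congr 1
  funext i
  rw [decide_eq_decide]
  exact forall_congr' fun j => by rw [key i j]

lemma sum_prod_piece {ι α : Type} [Fintype ι] [Fintype α] [DecidableEq ι] (g : ι → α → ℝ) :
    ∑ ρ : ι → α, ∏ v, g v (ρ v) = ∏ v, ∑ o, g v o := by
  rw [Finset.prod_univ_sum, Fintype.piFinset_univ]

lemma prod_offblock {m k r : ℕ} (i : Fin m) (j : Fin (k + 1))
    (F : Fin m × Fin (k + 1) × Fin r → ℝ)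
    (hF : ∀ a b c, ¬(a = i ∧ b = j) → F (a, b, c) = 1) :
    ∏ v, F v = ∏ c, F (i, j, c) := by
  rw [Fintype.prod_prod_type]
  rw [Finset.prod_eq_single_of_mem i (Finset.mem_univ i) (fun a _ ha =>
    Finset.prod_eq_one fun w _ => hF a w.1 w.2 (fun hc => ha hc.1))]
  rw [Fintype.prod_prod_type]
  exact Finset.prod_eq_single_of_mem j (Finset.mem_univ j) (fun b _ hb =>
    Finset.prod_eq_one fun c _ => hF i b c (fun hc => hb hc.2))

lemma RpDensity_nonneg {ι : Type} [Fintype ι] {p : ℝ} (hp0 : 0 < p) (hp1 : p ≤ 1)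
    (ρ : ι → Option Bool) : 0 ≤ RpDensity p ρ := by
  refine Finset.prod_nonneg fun v _ => ?_
  cases ρ v with
  | none => exact le_of_lt hp0
  | some b => simp; linarith

lemma sum_RpDensity {ι : Type} [Fintype ι] [DecidableEq ι] (p : ℝ) :
    ∑ ρ : ι → Option Bool, RpDensity p ρ = 1 := by
  unfold RpDensity
  refine (sum_prod_piece (ι := ι)
    (fun _ (o : Option Bool) => o.elim p fun _ => (1 - p) / 2)).trans ?_
  refine Finset.prod_eq_one fun v _ => ?_
  rw [Fintype.sum_option, Fintype.sum_bool]
  show p + ((1 - p) / 2 + (1 - p) / 2) = 1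
  ring

lemma block_chernoff (m k r : ℕ) (p : ℝ) (hp0 : 0 < p) (hp1 : p ≤ 1) (r' : ℕ)
    (hr' : (r' : ℝ) ≤ p * r / 2) (i : Fin m) (j : Fin (k + 1)) :
    prOf (RpDensity p)
      (fun ρ : (Fin m × Fin (k + 1) × Fin r) → Option Bool =>
        (univ.filter fun ℓ => ρ (i, j, ℓ) = none).card < r')
      ≤ Real.exp (-(p * r / 8)) := by
  classical
  set dens : Option Bool → ℝ := fun o => o.elim p fun _ => (1 - p) / 2 with hdens
  set h : (Fin m × Fin (k + 1) × Fin r) → Option Bool → ℝ :=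
    fun v o => if v.1 = i ∧ v.2.1 = j ∧ o = none then 1/2 else 1 with hh
  have hnn : ∀ v o, 0 ≤ dens o * h v o := by
    intro v o
    have h1 : 0 ≤ dens o := by
      cases o with
      | none => exact le_of_lt hp0
      | some b => show (0:ℝ) ≤ (1 - p)/2; linarith
    have h2 : 0 ≤ h v o := by
      rw [hh]; dsimp only; split <;> norm_num
    exact mul_nonneg h1 h2
  have hX : ∀ ρ : (Fin m × Fin (k + 1) × Fin r) → Option Bool,
      ∏ v, h v (ρ v) =
        (1/2 : ℝ) ^ (univ.filter fun ℓ => ρ (i, j, ℓ) = none).card := by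
    intro ρ
    rw [prod_offblock i j (fun v => h v (ρ v)) (fun a b c hc => by
      rw [hh]; dsimp only; rw [if_neg]; rintro ⟨h1, h2, -⟩; exact hc ⟨h1, h2⟩)]
    have : ∀ c : Fin r, h (i, j, c) (ρ (i, j, c)) =
        if ρ (i, j, c) = none then (1/2 : ℝ) else 1 := by
      intro c
      rw [hh]; dsimp only
      by_cases hc : ρ (i, j, c) = none
      · rw [if_pos ⟨rfl, rfl, hc⟩, if_pos hc]
      · rw [if_neg (fun hx => hc hx.2.2), if_neg hc]
    rw [Finset.prod_congr rfl fun c _ => this c, ← Finset.prod_filter]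
    exact Finset.prod_const _
  have key : prOf (RpDensity p)
      (fun ρ : (Fin m × Fin (k + 1) × Fin r) → Option Bool =>
        (univ.filter fun ℓ => ρ (i, j, ℓ) = none).card < r')
      ≤ (2:ℝ) ^ r' * ∑ ρ : (Fin m × Fin (k + 1) × Fin r) → Option Bool,
          ∏ v, (dens (ρ v) * h v (ρ v)) := by
    unfold prOf
    rw [Finset.mul_sum]
    refine Finset.sum_le_sum fun ρ _ => ?_
    have hsplit : ∏ v, (dens (ρ v) * h v (ρ v)) =
        RpDensity p ρ * (1/2 : ℝ) ^ (univ.filter fun ℓ => ρ (i, j, ℓ) = none).card := by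
      rw [Finset.prod_mul_distrib, hX ρ]; rfl
    rw [hsplit]
    set X := (univ.filter fun ℓ => ρ (i, j, ℓ) = none).card with hXdef
    have hRnn : 0 ≤ RpDensity p ρ := RpDensity_nonneg hp0 hp1 ρ
    by_cases hP : X < r'
    · rw [if_pos hP]
      have hpow : (1/2 : ℝ) ^ r' ≤ (1/2 : ℝ) ^ X :=
        pow_le_pow_of_le_one (by norm_num) (by norm_num) (le_of_lt hP)
      have h0 : (1:ℝ) ≤ (2:ℝ) ^ r' * (1/2 : ℝ) ^ X := by
        calc (1:ℝ) = (2 * (1/2) : ℝ) ^ r' := by norm_num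
          _ = (2:ℝ) ^ r' * (1/2 : ℝ) ^ r' := mul_pow _ _ _
          _ ≤ (2:ℝ) ^ r' * (1/2 : ℝ) ^ X :=
              mul_le_mul_of_nonneg_left hpow (by positivity)
      calc RpDensity p ρ = RpDensity p ρ * 1 := (mul_one _).symm
        _ ≤ RpDensity p ρ * ((2:ℝ) ^ r' * (1/2 : ℝ) ^ X) :=
            mul_le_mul_of_nonneg_left h0 hRnn
        _ = (2:ℝ) ^ r' * (RpDensity p ρ * (1/2 : ℝ) ^ X) := by ring
    · rw [if_neg hP]
      positivity
  have hfact : ∑ ρ : (Fin m × Fin (k + 1) × Fin r) → Option Bool,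
      ∏ v, (dens (ρ v) * h v (ρ v)) = (1 - p/2 : ℝ) ^ r := by
    rw [sum_prod_piece (fun v o => dens o * h v o)]
    have hv : ∀ v : Fin m × Fin (k + 1) × Fin r,
        ∑ o : Option Bool, dens o * h v o =
          if v.1 = i ∧ v.2.1 = j then (1 - p/2 : ℝ) else 1 := by
      intro v
      by_cases hc : v.1 = i ∧ v.2.1 = j
      · rw [if_pos hc]
        rw [Fintype.sum_option, Fintype.sum_bool]
        rw [hh, hdens]; dsimp only
        rw [if_pos ⟨hc.1, hc.2, rfl⟩, if_neg (by rintro ⟨-, -, h⟩; cases h),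
          if_neg (by rintro ⟨-, -, h⟩; cases h)]
        show p * (1/2) + ((1 - p)/2 * 1 + (1 - p)/2 * 1) = 1 - p/2
        ring
      · rw [if_neg hc]
        rw [Fintype.sum_option, Fintype.sum_bool]
        rw [hh, hdens]; dsimp only
        rw [if_neg (fun hx => hc ⟨hx.1, hx.2.1⟩), if_neg (fun hx => hc ⟨hx.1, hx.2.1⟩),
          if_neg (fun hx => hc ⟨hx.1, hx.2.1⟩)]
        show p * 1 + ((1 - p)/2 * 1 + (1 - p)/2 * 1) = 1
        ring
    rw [Finset.prod_congr rfl fun v _ => hv v]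
    rw [prod_offblock i j _ (fun a b c hc => by rw [if_neg hc])]
    rw [Finset.prod_congr rfl fun c _ => if_pos ⟨rfl, rfl⟩]
    rw [Finset.prod_const]
    simp
  refine key.trans ?_
  rw [hfact]
  have hlog2 : Real.log 2 ≤ 3/4 := by
    have := Real.log_two_lt_d9
    linarith
  have hlog2nn : 0 ≤ Real.log 2 := Real.log_nonneg (by norm_num)
  have h2exp : (2:ℝ) ^ r' = Real.exp ((r' : ℝ) * Real.log 2) := by
    rw [← Real.exp_log (by norm_num : (0:ℝ) < 2), ← Real.exp_nat_mul, Real.exp_log]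
    norm_num
  have hbexp : (1 - p/2 : ℝ) ^ r ≤ Real.exp ((r : ℝ) * (-(p/2))) := by
    calc (1 - p/2 : ℝ) ^ r ≤ Real.exp (-(p/2)) ^ r := by
          refine pow_le_pow_left₀ (by linarith) ?_ r
          have := Real.add_one_le_exp (-(p/2))
          linarith
      _ = Real.exp ((r : ℝ) * (-(p/2))) := (Real.exp_nat_mul _ r).symm
  calc (2:ℝ) ^ r' * (1 - p/2 : ℝ) ^ r
      ≤ Real.exp ((r' : ℝ) * Real.log 2) * Real.exp ((r : ℝ) * (-(p/2))) := by
        rw [h2exp]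
        exact mul_le_mul_of_nonneg_left hbexp (Real.exp_nonneg _)
    _ = Real.exp ((r' : ℝ) * Real.log 2 + (r : ℝ) * (-(p/2))) := (Real.exp_add _ _).symm
    _ ≤ Real.exp (-(p * r / 8)) := by
        refine Real.exp_le_exp.2 ?_
        have hrn : (0:ℝ) ≤ (r:ℝ) := Nat.cast_nonneg r
        have h1 : (r' : ℝ) * Real.log 2 ≤ (p * r / 2) * (3/4) := by
          refine mul_le_mul hr' hlog2 hlog2nn ?_
          linarith
        nlinarith

end Aux4p2

/-- **Corollary 4.2 (`RW` retains a copy of itself under `R_p`).** Let `m,k,r`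
be positive, `n = m(k+1)r`, and `p ∈ (0,1]` with `p·r/2 ≥ 1`. Then with
probability at least `1 - m·(k+1)·exp(-p·r/8)` over `ρ ← R_p`, the function
`RW_{m,k,r}↾ρ` contains a perfect copy of `RW_{m,k,r'}` with `r' = ⌊p·r/2⌋`. -/

theorem RW_retains_copy (m k r : ℕ) (hm : 0 < m) (hk : 0 < k) (hr : 0 < r)
    (p : ℝ) (hp0 : 0 < p) (hp1 : p ≤ 1) (hpr : 1 ≤ p * (r : ℝ) / 2) :
    1 - (m : ℝ) * ((k : ℝ) + 1) * Real.exp (-(p * (r : ℝ) / 8)) ≤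
      prOf (RpDensity p)
        (fun ρ : (Fin m × Fin (k + 1) × Fin r) → Option Bool =>
          ContainsRW m k ⌊p * (r : ℝ) / 2⌋₊ (restrictF (RW m k r) ρ)) := by
  classical
  set r' := ⌊p * (r : ℝ) / 2⌋₊ with hr'def
  have hr'le : (r' : ℝ) ≤ p * (r : ℝ) / 2 := Nat.floor_le (by linarith)
  have hRnn : ∀ ρ : (Fin m × Fin (k + 1) × Fin r) → Option Bool, 0 ≤ RpDensity p ρ :=
    fun ρ => RpDensity_nonneg hp0 hp1 ρ
  have hsum := sum_RpDensity (ι := Fin m × Fin (k + 1) × Fin r) p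
  have hmono : prOf (RpDensity p)
      (fun ρ : (Fin m × Fin (k + 1) × Fin r) → Option Bool =>
        ∀ i j, r' ≤ (univ.filter fun ℓ => ρ (i, j, ℓ) = none).card) ≤
      prOf (RpDensity p)
        (fun ρ : (Fin m × Fin (k + 1) × Fin r) → Option Bool =>
          ContainsRW m k r' (restrictF (RW m k r) ρ)) :=
    prOf_mono _ hRnn (fun ρ hρ => contains_of_good m k r r' ρ hρ)
  refine le_trans ?_ hmono
  rw [prOf_compl _ hsum]
  have hunion : prOf (RpDensity p)
      (fun ρ : (Fin m × Fin (k + 1) × Fin r) → Option Bool =>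
        ¬ ∀ i j, r' ≤ (univ.filter fun ℓ => ρ (i, j, ℓ) = none).card) ≤
      (m : ℝ) * ((k : ℝ) + 1) * Real.exp (-(p * (r : ℝ) / 8)) := by
    have h1 : prOf (RpDensity p)
        (fun ρ : (Fin m × Fin (k + 1) × Fin r) → Option Bool =>
          ¬ ∀ i j, r' ≤ (univ.filter fun ℓ => ρ (i, j, ℓ) = none).card) ≤
        ∑ q : Fin m × Fin (k + 1), prOf (RpDensity p)
          (fun ρ : (Fin m × Fin (k + 1) × Fin r) → Option Bool =>
            (univ.filter fun ℓ => ρ (q.1, q.2, ℓ) = none).card < r') := by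
      refine le_trans (prOf_mono _ hRnn ?_) (prOf_union _ hRnn _)
      intro ρ hρ
      push_neg at hρ
      obtain ⟨i, j, hij⟩ := hρ
      exact ⟨(i, j), hij⟩
    refine h1.trans ?_
    calc ∑ q : Fin m × Fin (k + 1), prOf (RpDensity p)
          (fun ρ : (Fin m × Fin (k + 1) × Fin r) → Option Bool =>
            (univ.filter fun ℓ => ρ (q.1, q.2, ℓ) = none).card < r')
        ≤ ∑ _q : Fin m × Fin (k + 1), Real.exp (-(p * (r : ℝ) / 8)) :=
          Finset.sum_le_sum fun q _ => block_chernoff m k r p hp0 hp1 r' hr'le q.1 q.2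
      _ = (m : ℝ) * ((k : ℝ) + 1) * Real.exp (-(p * (r : ℝ) / 8)) := by
          rw [Finset.sum_const, Finset.card_univ, Fintype.card_prod,
            Fintype.card_fin, Fintype.card_fin, nsmul_eq_mul]
          push_cast
          ring
  linarith
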